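/- arXiv:2604.06837 — 2 statements merged into one kernel-verified Lean document; each statement's English description precedes it below -/
import Mathlib

section
/- Let F : ℝ^n → ℝ^n be κ-Lipschitz in a norm ‖·‖ with κ < 1 and fixed point Q*. Let Q_θ range over an arbitrary nonempty set S ⊆ ℝ^n, and suppose Q̂ ∈ S minimizes the residual ‖F(Q) − Q‖ over S. Then ‖Q̂ − Q*‖ ≤ ((1+κ)/(1−κ)) · inf_{Q ∈ S} ‖Q − Q*‖. -/
theorem quasi_optimality {E : Type*} [NormedAddCommGroup E]
    (κ : ℝ) (hκ : 0 ≤ κ ∧ κ < 1)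
    (F : E → E) (hF : ∀ x y : E, ‖F x - F y‖ ≤ κ * ‖x - y‖)
    (Qstar : E) (hfix : F Qstar = Qstar)
    (S : Set E) (hS : S.Nonempty)
    (Qhat : E) (hQhat : Qhat ∈ S)
    (hmin : ∀ Q ∈ S, ‖F Qhat - Qhat‖ ≤ ‖F Q - Q‖) :
    ‖Qhat - Qstar‖ ≤ (1 + κ) / (1 - κ) * ⨅ Q : S, ‖(Q : E) - Qstar‖ := by
  obtain ⟨hκ0, hκ1⟩ := hκ
  have h1κ : (0:ℝ) < 1 - κ := by linarith
  have h1κ' : (0:ℝ) < 1 + κ := by linarith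
  -- step 1: (1-κ)‖Qhat-Qstar‖ ≤ ‖F Qhat - Qhat‖
  have key : ∀ Q ∈ S, (1 - κ) * ‖Qhat - Qstar‖ ≤ (1 + κ) * ‖Q - Qstar‖ := by
    intro Q hQ
    have e1 : ‖Qhat - Qstar‖ ≤ ‖F Qhat - Qhat‖ + κ * ‖Qhat - Qstar‖ := by
      have := hF Qhat Qstar
      rw [hfix] at this
      calc ‖Qhat - Qstar‖ = ‖(Qhat - F Qhat) + (F Qhat - Qstar)‖ := by abel_nf
        _ ≤ ‖Qhat - F Qhat‖ + ‖F Qhat - Qstar‖ := norm_add_le _ _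
        _ ≤ ‖F Qhat - Qhat‖ + κ * ‖Qhat - Qstar‖ := by
            rw [norm_sub_rev (Qhat)]; linarith
    have e2 : ‖F Q - Q‖ ≤ (1 + κ) * ‖Q - Qstar‖ := by
      have := hF Q Qstar
      rw [hfix] at this
      calc ‖F Q - Q‖ = ‖(F Q - Qstar) + (Qstar - Q)‖ := by abel_nf
        _ ≤ ‖F Q - Qstar‖ + ‖Qstar - Q‖ := norm_add_le _ _
        _ ≤ (1 + κ) * ‖Q - Qstar‖ := by rw [norm_sub_rev Qstar]; linarith
    have := hmin Q hQ
    linarith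
  have hinf : (1 - κ) / (1 + κ) * ‖Qhat - Qstar‖ ≤ ⨅ Q : S, ‖(Q : E) - Qstar‖ := by
    have : Nonempty S := hS.to_subtype
    apply le_ciInf
    intro ⟨Q, hQ⟩
    have := key Q hQ
    rw [div_mul_eq_mul_div, div_le_iff₀ h1κ']
    linarith [this]
  have hc : 0 < (1 + κ) / (1 - κ) := div_pos h1κ' h1κ
  rw [← div_le_iff₀' hc]
  calc ‖Qhat - Qstar‖ / ((1 + κ) / (1 - κ)) = (1 - κ) / (1 + κ) * ‖Qhat - Qstar‖ := by
        field_simp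
    _ ≤ _ := hinf
end

section
/- Let F : ℝ^n → ℝ^n be defined componentwise by (F Q)_k = R_k + γ ∑_{k'} P_{k,k'} · λ ln(∑_{j} exp(Q_{k',j}/λ)), where each row of P is a probability distribution, λ > 0, and γ ∈ [0,1) — interpreting Q ∈ ℝ^{S×A} indexed by state-action pairs. Then F is a γ-contraction in the sup norm: ‖F Q − F Q'‖_∞ ≤ γ ‖Q − Q'‖_∞. -/
open Finset

lemma lse_le_aux {A : Type*} [Fintype A] [Nonempty A] (lam : ℝ) (hlam : 0 < lam)
    (x y : A → ℝ) (M : ℝ) (h : ∀ u, x u ≤ y u + M) :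
    lam * Real.log (∑ u, Real.exp (x u / lam)) ≤
      lam * Real.log (∑ u, Real.exp (y u / lam)) + M := by
  have hpos : 0 < ∑ u, Real.exp (y u / lam) :=
    Finset.sum_pos (fun u _ => Real.exp_pos _) Finset.univ_nonempty
  have hsum : ∑ u, Real.exp (x u / lam) ≤ Real.exp (M / lam) * ∑ u, Real.exp (y u / lam) := by
    rw [Finset.mul_sum]
    apply Finset.sum_le_sum
    intro u _
    rw [← Real.exp_add]
    apply Real.exp_le_exp.mpr
    rw [← add_div]
    exact (div_le_div_iff_of_pos_right hlam).mpr (by linarith [h u])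
  have hlog : Real.log (∑ u, Real.exp (x u / lam)) ≤
      M / lam + Real.log (∑ u, Real.exp (y u / lam)) := by
    calc Real.log (∑ u, Real.exp (x u / lam))
        ≤ Real.log (Real.exp (M / lam) * ∑ u, Real.exp (y u / lam)) :=
          Real.log_le_log (Finset.sum_pos (fun u _ => Real.exp_pos _) Finset.univ_nonempty) hsum
      _ = M / lam + Real.log (∑ u, Real.exp (y u / lam)) := by
          rw [Real.log_mul (Real.exp_ne_zero _) (ne_of_gt hpos), Real.log_exp]
  calc lam * Real.log (∑ u, Real.exp (x u / lam))
      ≤ lam * (M / lam + Real.log (∑ u, Real.exp (y u / lam))) := by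
        exact mul_le_mul_of_nonneg_left hlog hlam.le
    _ = lam * Real.log (∑ u, Real.exp (y u / lam)) + M := by
        field_simp; ring

lemma lse_abs_diff {A : Type*} [Fintype A] [Nonempty A] (lam : ℝ) (hlam : 0 < lam)
    (x y : A → ℝ) (M : ℝ) (h : ∀ u, |x u - y u| ≤ M) :
    |lam * Real.log (∑ u, Real.exp (x u / lam)) -
      lam * Real.log (∑ u, Real.exp (y u / lam))| ≤ M := by
  rw [abs_sub_le_iff]
  constructor
  · have := lse_le_aux lam hlam x y M (fun u => by have := abs_le.mp (h u); linarith [this.2])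
    linarith
  · have := lse_le_aux lam hlam y x M (fun u => by have := abs_le.mp (h u); linarith [this.1])
    linarith

theorem soft_bellman_sup_contraction
    (S A : Type*) [Fintype S] [Fintype A] [Nonempty S] [Nonempty A]
    (γ lam : ℝ) (hγ : 0 ≤ γ ∧ γ < 1) (hlam : 0 < lam)
    (R : S × A → ℝ) (P : (S × A) → S → ℝ)
    (hP : ∀ sa, (∀ s', 0 ≤ P sa s') ∧ ∑ s', P sa s' = 1) :
    ∀ Q Q' : S × A → ℝ,
      (Finset.univ.sup' Finset.univ_nonempty fun sa : S × A =>
        |(R sa + γ * ∑ s', P sa s' * (lam * Real.log (∑ u : A, Real.exp (Q (s', u) / lam))))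
          - (R sa + γ * ∑ s', P sa s' * (lam * Real.log (∑ u : A, Real.exp (Q' (s', u) / lam))))|)
        ≤ γ * Finset.univ.sup' Finset.univ_nonempty fun sa : S × A => |Q sa - Q' sa| := by
  intro Q Q'
  set M := Finset.univ.sup' Finset.univ_nonempty fun sa : S × A => |Q sa - Q' sa| with hM
  apply Finset.sup'_le
  intro sa _
  have hkey : ∀ s' : S,
      |lam * Real.log (∑ u : A, Real.exp (Q (s', u) / lam)) -
        lam * Real.log (∑ u : A, Real.exp (Q' (s', u) / lam))| ≤ M := by
    intro s'
    exact lse_abs_diff lam hlam _ _ M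
      (fun u => Finset.le_sup' (fun sa : S × A => |Q sa - Q' sa|) (Finset.mem_univ (s', u)))
  have h1 : |(R sa + γ * ∑ s', P sa s' * (lam * Real.log (∑ u : A, Real.exp (Q (s', u) / lam))))
      - (R sa + γ * ∑ s', P sa s' * (lam * Real.log (∑ u : A, Real.exp (Q' (s', u) / lam))))|
      = |γ| * |∑ s', P sa s' * ((lam * Real.log (∑ u : A, Real.exp (Q (s', u) / lam)))
          - (lam * Real.log (∑ u : A, Real.exp (Q' (s', u) / lam))))| := by
    have hsub : ∑ s', P sa s' * ((lam * Real.log (∑ u : A, Real.exp (Q (s', u) / lam)))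
          - (lam * Real.log (∑ u : A, Real.exp (Q' (s', u) / lam))))
        = (∑ s', P sa s' * (lam * Real.log (∑ u : A, Real.exp (Q (s', u) / lam))))
          - ∑ s', P sa s' * (lam * Real.log (∑ u : A, Real.exp (Q' (s', u) / lam))) := by
      rw [← Finset.sum_sub_distrib]
      exact Finset.sum_congr rfl (fun s' _ => by ring)
    rw [← abs_mul, hsub]
    congr 1
    ring
  rw [h1, abs_of_nonneg hγ.1]
  apply mul_le_mul_of_nonneg_left _ hγ.1
  calc |∑ s', P sa s' * ((lam * Real.log (∑ u : A, Real.exp (Q (s', u) / lam)))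
          - (lam * Real.log (∑ u : A, Real.exp (Q' (s', u) / lam))))|
      ≤ ∑ s', |P sa s' * ((lam * Real.log (∑ u : A, Real.exp (Q (s', u) / lam)))
          - (lam * Real.log (∑ u : A, Real.exp (Q' (s', u) / lam))))| :=
        Finset.abs_sum_le_sum_abs _ _
    _ ≤ ∑ s', P sa s' * M := by
        apply Finset.sum_le_sum
        intro s' _
        rw [abs_mul, abs_of_nonneg ((hP sa).1 s')]
        exact mul_le_mul_of_nonneg_left (hkey s') ((hP sa).1 s')
    _ = M := by rw [← Finset.sum_mul, (hP sa).2, one_mul]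
end
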